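/- arXiv:1312.4505 — 4 statements merged into one kernel-verified Lean document; each statement's English description precedes it below -/
import Mathlib

section
/- Let V be a real Hilbert space with inner product a(·,·) and induced norm ‖·‖. Let u_ex, u_D ∈ V and u_N in a larger inner product space W ⊇ V (with a extended to W). Suppose there exists σ̂_N ∈ W with a(σ̂_N − u_ex, φ) = 0 for all φ ∈ V, ‖φ‖ ≤ 1 implies a(u_ex − u_N, φ) = a(σ̂_N − u_N, φ). Then ‖u_ex − u_N‖_W ≤ ‖u_N − u_D‖_W + ‖σ̂_N − u_N‖_W. -/
open scoped RealInnerProductSpace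

theorem lemma1_abstract {W : Type*} [NormedAddCommGroup W] [InnerProductSpace ℝ W]
    (V : Submodule ℝ W)
    (uex uD : W) (huex : uex ∈ V) (huD : uD ∈ V)
    (uN : W)
    (sighat : W) (horth : ∀ φ ∈ V, ⟪sighat - uex, φ⟫ = 0) :
    ‖uex - uN‖ ≤ ‖uN - uD‖ + ‖sighat - uN‖ := by
  set U : Submodule ℝ W := Submodule.span ℝ {uex, uD} with hU
  have hfin : FiniteDimensional ℝ U := FiniteDimensional.span_of_finite ℝ (Set.toFinite _)
  set p : W := (U.orthogonalProjectionOnto uN : W) with hp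
  have hpU : p ∈ U := (U.orthogonalProjectionOnto uN).2
  have hUV : U ≤ V := by
    rw [hU, Submodule.span_le]
    intro x hx
    simp only [Set.mem_insert_iff, Set.mem_singleton_iff] at hx
    rcases hx with rfl | rfl
    · exact huex
    · exact huD
  have huexU : uex ∈ U := Submodule.subset_span (by simp)
  have huDU : uD ∈ U := Submodule.subset_span (by simp)
  have hperp : ∀ φ ∈ U, ⟪uN - p, φ⟫ = 0 := fun φ hφ =>
    U.starProjection_inner_eq_zero uN φ hφ
  -- h1 : ‖uex - p‖ ≤ ‖sighat - uN‖
  have key : ⟪uex - p, uex - p⟫ = ⟪sighat - uN, uex - p⟫ := by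
    have h0 : ⟪uN - p, uex - p⟫ = 0 := hperp _ (Submodule.sub_mem U huexU hpU)
    have h1 : ⟪sighat - uex, uex - p⟫ = 0 := horth _ (hUV (Submodule.sub_mem U huexU hpU))
    have : ⟪uex - p, uex - p⟫ = ⟪uex - uN, uex - p⟫ + ⟪uN - p, uex - p⟫ := by
      rw [← inner_add_left]; congr 1; abel
    rw [this, h0, add_zero]
    have : ⟪sighat - uN, uex - p⟫ = ⟪sighat - uex, uex - p⟫ + ⟪uex - uN, uex - p⟫ := by
      rw [← inner_add_left]; congr 1; abel
    rw [this, h1, zero_add]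
  have h1 : ‖uex - p‖ ≤ ‖sighat - uN‖ := by
    rcases eq_or_ne (uex - p) 0 with h | h
    · simp [h]
    · have hpos : (0:ℝ) < ‖uex - p‖ := norm_pos_iff.mpr h
      have := abs_real_inner_le_norm (sighat - uN) (uex - p)
      have hsq : ‖uex - p‖ * ‖uex - p‖ ≤ ‖sighat - uN‖ * ‖uex - p‖ := by
        rw [← real_inner_self_eq_norm_mul_norm, key]
        exact le_trans (le_abs_self _) this
      exact le_of_mul_le_mul_right hsq hpos
  -- h2 : ‖uN - p‖ ≤ ‖uN - uD‖
  have h2 : ‖uN - p‖ ≤ ‖uN - uD‖ := by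
    have horth2 : ⟪uN - p, p - uD⟫ = 0 := hperp _ (Submodule.sub_mem U hpU huDU)
    have hdecomp : uN - uD = (uN - p) + (p - uD) := by abel
    have : ‖uN - uD‖ ^ 2 = ‖uN - p‖ ^ 2 + ‖p - uD‖ ^ 2 := by
      rw [hdecomp, norm_add_sq_real, horth2]; ring
    nlinarith [norm_nonneg (uN - uD), norm_nonneg (uN - p), norm_nonneg (p - uD)]
  -- Pythagoras for uex - uN
  have h3 : ‖uex - uN‖ ^ 2 = ‖uex - p‖ ^ 2 + ‖uN - p‖ ^ 2 := by
    have h0 : ⟪uN - p, uex - p⟫ = 0 := hperp _ (Submodule.sub_mem U huexU hpU)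
    have horth3 : ⟪uex - p, p - uN⟫ = 0 := by
      rw [real_inner_comm, show p - uN = -(uN - p) by abel, inner_neg_left, h0, neg_zero]
    have hdecomp : uex - uN = (uex - p) + (p - uN) := by abel
    rw [hdecomp, norm_add_sq_real, horth3, show p - uN = -(uN - p) by abel, norm_neg]
    ring
  nlinarith [norm_nonneg (uex - uN), norm_nonneg (sighat - uN), norm_nonneg (uN - uD),
    norm_nonneg (uex - p), norm_nonneg (uN - p), h1, h2, h3]
end

section
/- Let W be a real inner product space, V ⊆ W a subspace, and u, v ∈ V, ũ, σ̂ ∈ W. Assume ⟨u − σ̂, φ⟩ = 0 for every φ ∈ V. Then ‖u − ũ‖ ≤ ‖v − ũ‖ + ‖σ̂ − ũ‖. -/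
open scoped RealInnerProductSpace

theorem vohralik_with_admissibility {W : Type*} [NormedAddCommGroup W] [InnerProductSpace ℝ W]
    (V : Submodule ℝ W)
    (u v : W) (hu : u ∈ V) (hv : v ∈ V)
    (utilde sighat : W)
    (horth : ∀ φ ∈ V, ⟪u - sighat, φ⟫ = 0) :
    ‖u - utilde‖ ≤ ‖v - utilde‖ + ‖sighat - utilde‖ := by
  by_cases hvu : u = v
  · subst hvu
    have := norm_nonneg (sighat - utilde)
    linarith
  · set d : W := u - v with hd
    have hdV : d ∈ V := V.sub_mem hu hv
    have hdne : d ≠ 0 := sub_ne_zero.mpr hvu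
    have hD : (0:ℝ) < ‖d‖ := norm_pos_iff.mpr hdne
    set t : ℝ := ⟪u - utilde, d⟫ with htdef
    have ht : t = ⟪sighat - utilde, d⟫ := by
      have h0 : ⟪u - sighat, d⟫ = 0 := horth d hdV
      have hsplit : u - utilde = (u - sighat) + (sighat - utilde) := by abel
      rw [htdef, hsplit, inner_add_left, h0, zero_add]
    have htc : |t| ≤ ‖sighat - utilde‖ * ‖d‖ := by
      rw [ht]; exact abs_real_inner_le_norm _ _
    have hb : ‖v - utilde‖ ^ 2 = ‖u - utilde‖ ^ 2 - 2 * t + ‖d‖ ^ 2 := by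
      have hrw : v - utilde = (u - utilde) - d := by rw [hd]; abel
      rw [hrw, norm_sub_sq_real, htdef]
    have key : ‖u - utilde‖ ^ 2 ≤ ‖v - utilde‖ ^ 2 + ‖sighat - utilde‖ ^ 2 := by
      have h1 : ‖u - utilde‖ ^ 2 * ‖d‖ ^ 2 ≤ ‖v - utilde‖ ^ 2 * ‖d‖ ^ 2 + t ^ 2 := by
        rw [hb]; nlinarith [sq_nonneg (t - ‖d‖ ^ 2)]
      have h2 : t ^ 2 ≤ ‖sighat - utilde‖ ^ 2 * ‖d‖ ^ 2 := by
        nlinarith [htc, abs_nonneg t, sq_abs t]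
      nlinarith [h1, h2, mul_pos hD hD]
    nlinarith [norm_nonneg (u - utilde), norm_nonneg (v - utilde),
      norm_nonneg (sighat - utilde), key]
end

section
/- (Main theorem, abstract form) Let W be a real inner product space, V ⊆ W a subspace, u ∈ V the exact solution, u_D ∈ V, u_N ∈ W, and σ̂ ∈ W with ⟨u − σ̂, φ⟩ = 0 for all φ ∈ V. Suppose moreover ‖u_N − u_D‖² = rᵀz for nonnegative real rᵀz. Then ‖u − u_N‖ ≤ √(rᵀz) + ‖σ̂ − u_N‖. -/
open scoped RealInnerProductSpace

theorem main_theorem_abstract {W : Type*} [NormedAddCommGroup W] [InnerProductSpace ℝ W]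
    (V : Submodule ℝ W)
    (u uD : W) (hu : u ∈ V) (huD : uD ∈ V)
    (uN sighat : W)
    (horth : ∀ φ ∈ V, ⟪u - sighat, φ⟫ = 0)
    (rz : ℝ) (hrz : 0 ≤ rz)
    (hres : ‖uN - uD‖ ^ 2 = rz) :
    ‖u - uN‖ ≤ Real.sqrt rz + ‖sighat - uN‖ := by
  set p := u - sighat with hp
  set q := sighat - uN with hq
  set z := uD - uN with hzdef
  have hpd : ⟪p, uD - u⟫ = 0 := horth _ (Submodule.sub_mem V huD hu)
  have hzsplit : z = (uD - u) + p + q := by rw [hzdef, hp, hq]; abel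
  have hpq : ⟪p, q⟫ = ⟪p, z⟫ - ‖p‖ ^ 2 := by
    have : ⟪p, z⟫ = ⟪p, uD - u⟫ + ⟪p, p⟫ + ⟪p, q⟫ := by
      rw [hzsplit, inner_add_right, inner_add_right]
    rw [this, hpd, real_inner_self_eq_norm_sq]; ring
  have huN : u - uN = p + q := by rw [hp, hq]; abel
  have hnorm : ‖u - uN‖ ^ 2 = ‖p‖ ^ 2 + 2 * ⟪p, q⟫ + ‖q‖ ^ 2 := by
    rw [huN, ← real_inner_self_eq_norm_sq, ← real_inner_self_eq_norm_sq,
      ← real_inner_self_eq_norm_sq, inner_add_add_self, real_inner_comm q p]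
    ring
  have hcs : ⟪p, z⟫ ≤ ‖p‖ * ‖z‖ := real_inner_le_norm p z
  have hsq : ‖u - uN‖ ^ 2 ≤ (‖z‖ + ‖q‖) ^ 2 := by
    have h1 : (‖z‖ - ‖p‖) ^ 2 ≥ 0 := sq_nonneg _
    have h2 : (0:ℝ) ≤ ‖z‖ * ‖q‖ := mul_nonneg (norm_nonneg _) (norm_nonneg _)
    nlinarith [hnorm, hpq, hcs]
  have hle : ‖u - uN‖ ≤ ‖z‖ + ‖q‖ := by
    have h0 : (0:ℝ) ≤ ‖z‖ + ‖q‖ := add_nonneg (norm_nonneg _) (norm_nonneg _)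
    nlinarith [norm_nonneg (u - uN)]
  have hzr : Real.sqrt rz = ‖z‖ := by
    rw [← hres, hzdef, ← norm_sub_rev uN uD]
    exact Real.sqrt_sq (norm_nonneg _)
  rw [hzr]
  exact hle
end

section
/- Under the hypotheses of the main theorem (u ∈ V exact, u_D ∈ V, u_N ∈ W, σ̂ ∈ W with ⟨u − σ̂, φ⟩ = 0 for all φ ∈ V, and ‖u_N − u_D‖² = rᵀz), one has ‖u − u_D‖ ≤ 2√(rᵀz) + ‖σ̂ − u_N‖. -/
open scoped RealInnerProductSpace

theorem continuous_field_bound {W : Type*} [NormedAddCommGroup W] [InnerProductSpace ℝ W]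
    (V : Submodule ℝ W)
    (u uD : W) (hu : u ∈ V) (huD : uD ∈ V)
    (uN sighat : W)
    (horth : ∀ φ ∈ V, ⟪u - sighat, φ⟫ = 0)
    (rz : ℝ) (hrz : 0 ≤ rz)
    (hres : ‖uN - uD‖ ^ 2 = rz) :
    ‖u - uD‖ ≤ 2 * Real.sqrt rz + ‖sighat - uN‖ := by
  have h0 : ⟪u - sighat, u - uD⟫ = 0 := horth _ (V.sub_mem hu huD)
  have hsplit : ⟪u - uD, u - uD⟫ = ⟪u - sighat, u - uD⟫ + ⟪sighat - uD, u - uD⟫ := by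
    rw [← inner_add_left, sub_add_sub_cancel]
  have hsq : ‖u - uD‖ ^ 2 ≤ ‖sighat - uD‖ * ‖u - uD‖ := by
    have := real_inner_le_norm (sighat - uD) (u - uD)
    have h2 : ‖u - uD‖ ^ 2 = ⟪sighat - uD, u - uD⟫ := by
      rw [← real_inner_self_eq_norm_sq, hsplit, h0, zero_add]
    linarith
  have h3 : ‖u - uD‖ ≤ ‖sighat - uD‖ := by
    nlinarith [norm_nonneg (u - uD), norm_nonneg (sighat - uD)]
  have h4 : ‖sighat - uD‖ ≤ ‖sighat - uN‖ + ‖uN - uD‖ := by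
    have : sighat - uD = (sighat - uN) + (uN - uD) := by abel
    rw [this]; exact norm_add_le _ _
  have h5 : ‖uN - uD‖ = Real.sqrt rz := by
    rw [← hres, Real.sqrt_sq (norm_nonneg _)]
  have h6 : 0 ≤ Real.sqrt rz := Real.sqrt_nonneg _
  linarith
end
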